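/- Let d ≥ 1, let ω ∈ ℝ^d be nonzero, and let f be a symmetric real d×d matrix such that Σ_{i,j} f_{ij} ξ_i ξ_j = 0 for every ξ ∈ ℝ^d with ⟨ξ, ω⟩ = 0. Then there exists a vector v ∈ ℝ^d such that f_{ij} = v_i ω_j + v_j ω_i for all i, j. -/

import Mathlib

/-- A symmetric matrix whose quadratic form vanishes on the hyperplane orthogonal to a
nonzero vector `ω` is the symmetrized product of `ω` with some vector `v`. -/
theorem vanishing_on_hyperplane_is_potential
    (d : ℕ) (hd : 1 ≤ d) (ω : Fin d → ℝ) (hω : ω ≠ 0)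
    (f : Matrix (Fin d) (Fin d) ℝ) (hf : f.IsSymm)
    (hq : ∀ ξ : Fin d → ℝ, (∑ i, ξ i * ω i) = 0 → ∑ i, ∑ j, f i j * ξ i * ξ j = 0) :
    ∃ v : Fin d → ℝ, ∀ i j, f i j = v i * ω j + v j * ω i := by
  classical
  set N : ℝ := ∑ k, ω k * ω k with hNdef
  have hNpos : 0 < N := by
    obtain ⟨k, hk⟩ : ∃ k, ω k ≠ 0 := by
      by_contra h; push_neg at h; exact hω (funext h)
    refine Finset.sum_pos' (fun i _ => mul_self_nonneg _) ⟨k, Finset.mem_univ k, mul_self_pos.mpr hk⟩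
  have hNne : N ≠ 0 := ne_of_gt hNpos
  have hsym : ∀ i j, f j i = f i j := fun i j => hf.apply i j
  set a : Fin d → ℝ := fun i => ∑ j, f i j * ω j with hadef
  set c : ℝ := ∑ i, (∑ j, f i j * ω j) * ω i with hcdef
  -- bilinear form vanishes on the hyperplane
  have hB : ∀ ξ η : Fin d → ℝ, (∑ i, ξ i * ω i) = 0 → (∑ i, η i * ω i) = 0 →
      ∑ i, ∑ j, f i j * ξ i * η j = 0 := by
    intro ξ η hξ hη
    have h1 := hq ξ hξ
    have h2 := hq η hη
    have h3 := hq (ξ + η) (by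
      simp only [Pi.add_apply, add_mul, Finset.sum_add_distrib, hξ, hη, add_zero])
    have hswap : ∑ i, ∑ j, f i j * η i * ξ j = ∑ i, ∑ j, f i j * ξ i * η j := by
      rw [Finset.sum_comm]
      refine Finset.sum_congr rfl fun i _ => Finset.sum_congr rfl fun j _ => ?_
      rw [hsym j i]; ring
    have hexp : ∑ i, ∑ j, f i j * (ξ + η) i * (ξ + η) j
        = (∑ i, ∑ j, f i j * ξ i * ξ j) + (∑ i, ∑ j, f i j * ξ i * η j)
          + (∑ i, ∑ j, f i j * η i * ξ j) + (∑ i, ∑ j, f i j * η i * η j) := by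
      simp only [Pi.add_apply]
      rw [← Finset.sum_add_distrib, ← Finset.sum_add_distrib, ← Finset.sum_add_distrib]
      refine Finset.sum_congr rfl fun i _ => ?_
      rw [← Finset.sum_add_distrib, ← Finset.sum_add_distrib, ← Finset.sum_add_distrib]
      exact Finset.sum_congr rfl fun j _ => by ring
    rw [hexp, h1, h2, hswap] at h3
    linarith
  -- main computation for entries
  have key : ∀ i j, f i j = (a i * ω j + a j * ω i) / N - c * ω i * ω j / (N * N) := by
    intro i j
    set ξ : Fin d → ℝ := fun k => (if k = i then (1:ℝ) else 0) - ω i / N * ω k with hξdef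
    set η : Fin d → ℝ := fun k => (if k = j then (1:ℝ) else 0) - ω j / N * ω k with hηdef
    have hξ0 : (∑ k, ξ k * ω k) = 0 := by
      simp only [hξdef, sub_mul, Finset.sum_sub_distrib, ite_mul, one_mul, zero_mul,
        Finset.sum_ite_eq', Finset.mem_univ, if_true, mul_assoc, ← Finset.mul_sum, ← hNdef]
      field_simp
      ring
    have hη0 : (∑ k, η k * ω k) = 0 := by
      simp only [hηdef, sub_mul, Finset.sum_sub_distrib, ite_mul, one_mul, zero_mul,
        Finset.sum_ite_eq', Finset.mem_univ, if_true, mul_assoc, ← Finset.mul_sum, ← hNdef]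
      field_simp
      ring
    have hBξη := hB ξ η hξ0 hη0
    -- evaluate the double sum
    have hinner : ∀ i', ∑ j', f i' j' * ξ i' * η j'
        = ξ i' * (f i' j - ω j / N * a i') := by
      intro i'
      have : ∀ j', f i' j' * ξ i' * η j'
          = ξ i' * (f i' j' * (if j' = j then (1:ℝ) else 0)) - ξ i' * (ω j / N * (f i' j' * ω j')) := by
        intro j'; simp only [hηdef]; ring
      rw [Finset.sum_congr rfl fun j' _ => this j']
      rw [Finset.sum_sub_distrib, ← Finset.mul_sum, ← Finset.mul_sum, ← Finset.mul_sum]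
      simp only [mul_ite, mul_one, mul_zero, Finset.sum_ite_eq', Finset.mem_univ, if_true]
      rw [hadef]; ring
    rw [Finset.sum_congr rfl fun i' _ => hinner i'] at hBξη
    have hsplit : ∑ i', ξ i' * (f i' j - ω j / N * a i')
        = (∑ i', (if i' = i then (1:ℝ) else 0) * f i' j)
          - (∑ i', (if i' = i then (1:ℝ) else 0) * (ω j / N * a i'))
          - ω i / N * (∑ i', ω i' * f i' j)
          + ω i / N * (ω j / N * ∑ i', ω i' * a i') := by
      simp only [Finset.mul_sum, ← Finset.sum_sub_distrib, ← Finset.sum_add_distrib]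
      refine Finset.sum_congr rfl fun i' _ => ?_
      simp only [hξdef]; ring
    rw [hsplit] at hBξη
    simp only [ite_mul, one_mul, zero_mul, Finset.sum_ite_eq', Finset.mem_univ, if_true] at hBξη
    have haj : (∑ i', ω i' * f i' j) = a j := by
      rw [hadef]
      refine Finset.sum_congr rfl fun i' _ => ?_
      rw [hsym i' j]; ring
    have hc : (∑ i', ω i' * a i') = c := by
      rw [hcdef, hadef]
      exact Finset.sum_congr rfl fun i' _ => by ring
    rw [haj, hc] at hBξη
    field_simp at hBξη ⊢
    linarith
  refine ⟨fun i => a i / N - c * ω i / (2 * N * N), fun i j => ?_⟩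
  rw [key i j]
  field_simp
  ring
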